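/- Let z = (z̄, z̃) ∈ ∂(P^α_{m,n})^* with z̄ ≠ 0 (so z̃ᵢ > 0 for all i), and let f = (-z̄/‖z̄‖², α ∘ z̃^{-1}) generate the ray F_r = {z}^⊥ ∩ P^α_{m,n}. For ε ∈ (0, α₁) define q_ε = (-z̄/‖z̄‖², q̃_ε) with (q̃_ε)₁ = (α₁-ε)/z̃₁, (q̃_ε)₂ = (α₂+ε)/z̃₂, and (q̃_ε)ᵢ = αᵢ/z̃ᵢ for i ≥ 3. Then ⟨z, q_ε⟩ = 0, dist(q_ε, P^α_{m,n}) = O(ε²) and dist(q_ε, F_r) = Ω(ε) as ε ↓ 0; hence limsup_{ε↓0} dist(q_ε, P^α_{m,n})^{1/2} / dist(q_ε, F_r) < ∞. -/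

import Mathlib

open Finset

noncomputable section

abbrev E (m n : ℕ) : Type := WithLp 2 (EuclideanSpace ℝ (Fin m) × EuclideanSpace ℝ (Fin n))

def PowCone (m n : ℕ) (α : Fin n → ℝ) : Set (E m n) :=
  {x | (∀ i, 0 ≤ x.ofLp.2 i) ∧ ‖x.ofLp.1‖ ≤ ∏ i, x.ofLp.2 i ^ α i}

private lemma log_lb_aux (y : ℝ) (h1 : -1/2 ≤ y) : y - 2*y^2 ≤ Real.log (1 + y) := by
  have hpos : 0 < 1 + y := by linarith
  have h := Real.log_le_sub_one_of_pos (x := (1+y)⁻¹) (by positivity)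
  rw [Real.log_inv] at h
  have h3 : (1+y)⁻¹ - 1 = -y/(1+y) := by field_simp; ring
  rw [h3] at h
  have h4 : -y/(1+y) ≤ -y + 2*y^2 := by
    rw [div_le_iff₀ hpos]; nlinarith [sq_nonneg y]
  nlinarith

private lemma quad_lb (a b cc d u εv : ℝ) (ha : 0 < a) (hb : 0 < b) :
    ((a*d + b*cc)*εv)^2 ≤ ((u*a - εv*cc)^2 + (u*b + εv*d)^2) * (a+b)^2 := by
  nlinarith [sq_nonneg (a*(u*a - εv*cc) + b*(u*b + εv*d)),
    mul_nonneg (mul_pos ha hb).le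
      (add_nonneg (sq_nonneg (u*a - εv*cc)) (sq_nonneg (u*b + εv*d)))]

set_option maxHeartbeats 2000000 in
/-- Optimality of the exponent `1/2` for the one-dimensional face `F_r`: along the curve
`q_ε ∈ {z}^⊥` one has `dist(q_ε, P) = O(ε²)` and `dist(q_ε, F_r) = Ω(ε)` as `ε ↓ 0`. -/
theorem powCone_half_optimality (m n : ℕ) (hm : 1 ≤ m) (hn : 2 ≤ n)
    (α : Fin n → ℝ) (hα : ∀ i, 0 < α i ∧ α i < 1) (hαsum : ∑ i, α i = 1)
    (z : E m n) (hz2 : ∀ i, 0 < z.ofLp.2 i)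
    (hzbd : ‖z.ofLp.1‖ = ∏ i, (z.ofLp.2 i / α i) ^ α i) (hz1 : z.ofLp.1 ≠ 0)
    (f : E m n) (hf1 : f.ofLp.1 = (-(‖z.ofLp.1‖ ^ 2)⁻¹) • z.ofLp.1) (hf2 : ∀ i, f.ofLp.2 i = α i / z.ofLp.2 i)
    (Fr : Set (E m n)) (hFr : Fr = {x : E m n | ∃ t : ℝ, 0 ≤ t ∧ x = t • f})
    (q : ℝ → E m n)
    (hq1 : ∀ ε ∈ Set.Ioo (0:ℝ) (α ⟨0, by omega⟩),
      (q ε).ofLp.1 = (-(‖z.ofLp.1‖ ^ 2)⁻¹) • z.ofLp.1)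
    (hq2 : ∀ ε ∈ Set.Ioo (0:ℝ) (α ⟨0, by omega⟩),
      (q ε).ofLp.2 ⟨0, by omega⟩ = (α ⟨0, by omega⟩ - ε) / z.ofLp.2 ⟨0, by omega⟩ ∧
      (q ε).ofLp.2 ⟨1, by omega⟩ = (α ⟨1, by omega⟩ + ε) / z.ofLp.2 ⟨1, by omega⟩ ∧
      ∀ i : Fin n, i ≠ ⟨0, by omega⟩ → i ≠ ⟨1, by omega⟩ →
        (q ε).ofLp.2 i = α i / z.ofLp.2 i) :
    (∀ ε ∈ Set.Ioo (0:ℝ) (α ⟨0, by omega⟩),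
      (∑ i, z.ofLp.1 i * (q ε).ofLp.1 i) + (∑ i, z.ofLp.2 i * (q ε).ofLp.2 i) = 0) ∧
    ∃ c₁ c₂ ε₀ : ℝ, 0 < c₁ ∧ 0 < c₂ ∧ 0 < ε₀ ∧
      ∀ ε : ℝ, 0 < ε → ε < ε₀ → ε < α ⟨0, by omega⟩ →
        Metric.infDist (q ε) (PowCone m n α) ≤ c₁ * ε ^ 2 ∧
        c₂ * ε ≤ Metric.infDist (q ε) Fr := by
  have hn0 : 0 < n := by omega
  have hn1 : 1 < n := by omega
  have hi01 : (⟨0, hn0⟩ : Fin n) ≠ ⟨1, hn1⟩ := by simp [Fin.ext_iff]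
  set N := ‖z.ofLp.1‖ with hNdef
  have hN : 0 < N := norm_pos_iff.mpr hz1
  have hA0 : 0 < α ⟨0, hn0⟩ := (hα _).1
  have hA1 : 0 < α ⟨1, hn1⟩ := (hα _).1
  have hW0 : 0 < z.ofLp.2 ⟨0, hn0⟩ := hz2 _
  have hW1 : 0 < z.ofLp.2 ⟨1, hn1⟩ := hz2 _
  constructor
  · -- orthogonality
    intro ε hε
    obtain ⟨h0', h1', hrest'⟩ := hq2 ε hε
    have h0 : (q ε).ofLp.2 ⟨0, hn0⟩ = (α ⟨0, hn0⟩ - ε) / z.ofLp.2 ⟨0, hn0⟩ := h0'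
    have h1 : (q ε).ofLp.2 ⟨1, hn1⟩ = (α ⟨1, hn1⟩ + ε) / z.ofLp.2 ⟨1, hn1⟩ := h1'
    have hrest : ∀ i : Fin n, i ≠ ⟨0, hn0⟩ → i ≠ ⟨1, hn1⟩ → (q ε).ofLp.2 i = α i / z.ofLp.2 i :=
      fun i hi hj => hrest' i hi hj
    have hsum1 : (∑ i, z.ofLp.1 i * (q ε).ofLp.1 i) = -1 := by
      rw [hq1 ε hε]
      have hc : ∀ i, z.ofLp.1 i * ((-(N ^ 2)⁻¹ : ℝ) • z.ofLp.1) i = (-(N^2)⁻¹) * (z.ofLp.1 i * z.ofLp.1 i) := by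
        intro i; simp [PiLp.smul_apply]; ring
      rw [Finset.sum_congr rfl (fun i _ => hc i), ← Finset.mul_sum]
      have hzz : ∑ i, z.ofLp.1 i * z.ofLp.1 i = N^2 := by
        rw [hNdef, EuclideanSpace.norm_eq, Real.sq_sqrt (Finset.sum_nonneg fun i _ => sq_nonneg _)]
        simp only [Real.norm_eq_abs, sq, abs_mul_abs_self]
      rw [hzz]; field_simp
    have hsum2 : (∑ i, z.ofLp.2 i * (q ε).ofLp.2 i) = 1 := by
      have key : ∀ i : Fin n, z.ofLp.2 i * (q ε).ofLp.2 i
          = α i + ((if i = (⟨0, hn0⟩ : Fin n) then -ε else 0)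
                 + (if i = (⟨1, hn1⟩ : Fin n) then ε else 0)) := by
        intro i
        by_cases hc0 : i = (⟨0, hn0⟩ : Fin n)
        · subst hc0
          rw [if_pos rfl, if_neg hi01, h0]
          have hcv : z.ofLp.2 ⟨0, hn0⟩ * ((α ⟨0, hn0⟩ - ε) / z.ofLp.2 ⟨0, hn0⟩)
              = α ⟨0, hn0⟩ - ε := by
            rw [mul_comm, div_mul_cancel₀ _ hW0.ne']
          rw [hcv]; ring
        · by_cases hc1 : i = (⟨1, hn1⟩ : Fin n)
          · subst hc1
            rw [if_neg hc0, if_pos rfl, h1]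
            have hcv : z.ofLp.2 ⟨1, hn1⟩ * ((α ⟨1, hn1⟩ + ε) / z.ofLp.2 ⟨1, hn1⟩)
                = α ⟨1, hn1⟩ + ε := by
              rw [mul_comm, div_mul_cancel₀ _ hW1.ne']
            rw [hcv]; ring
          · rw [if_neg hc0, if_neg hc1, hrest i hc0 hc1]
            have hcv : z.ofLp.2 i * (α i / z.ofLp.2 i) = α i := by
              rw [mul_comm, div_mul_cancel₀ _ (hz2 i).ne']
            rw [hcv]; ring
      rw [Finset.sum_congr rfl (fun i _ => key i), Finset.sum_add_distrib, hαsum,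
        Finset.sum_add_distrib, Finset.sum_ite_eq' univ (⟨0, hn0⟩ : Fin n) (fun _ => -ε),
        Finset.sum_ite_eq' univ (⟨1, hn1⟩ : Fin n) (fun _ => ε)]
      simp
    rw [hsum1, hsum2]; ring
  · -- quantitative bounds
    refine ⟨2*(1/α ⟨0, hn0⟩ + 1/α ⟨1, hn1⟩) * N⁻¹,
      (α ⟨0, hn0⟩ / z.ofLp.2 ⟨0, hn0⟩ * (z.ofLp.2 ⟨1, hn1⟩)⁻¹
        + α ⟨1, hn1⟩ / z.ofLp.2 ⟨1, hn1⟩ * (z.ofLp.2 ⟨0, hn0⟩)⁻¹)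
        / (α ⟨0, hn0⟩ / z.ofLp.2 ⟨0, hn0⟩ + α ⟨1, hn1⟩ / z.ofLp.2 ⟨1, hn1⟩),
      α ⟨0, hn0⟩ / 2, by positivity, by positivity, by positivity, ?_⟩
    intro ε hε hε2 hε3
    have hεIoo : ε ∈ Set.Ioo (0:ℝ) (α ⟨0, hn0⟩) := ⟨hε, hε3⟩
    obtain ⟨h0', h1', hrest'⟩ := hq2 ε hεIoo
    have h0 : (q ε).ofLp.2 ⟨0, hn0⟩ = (α ⟨0, hn0⟩ - ε) / z.ofLp.2 ⟨0, hn0⟩ := h0'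
    have h1 : (q ε).ofLp.2 ⟨1, hn1⟩ = (α ⟨1, hn1⟩ + ε) / z.ofLp.2 ⟨1, hn1⟩ := h1'
    have hrest : ∀ i : Fin n, i ≠ ⟨0, hn0⟩ → i ≠ ⟨1, hn1⟩ → (q ε).ofLp.2 i = α i / z.ofLp.2 i :=
      fun i hi hj => hrest' i hi hj
    have hq1' := hq1 ε hεIoo
    set A0 := α ⟨0, hn0⟩ with hA0def
    set A1 := α ⟨1, hn1⟩ with hA1def
    set W0 := z.ofLp.2 ⟨0, hn0⟩ with hW0def
    set W1 := z.ofLp.2 ⟨1, hn1⟩ with hW1def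
    have hε3' : ε < A0 := hε3
    have hε2' : ε < A0 / 2 := hε2
    have hb0 : 0 < 1 - ε / A0 := by
      have h : ε / A0 < 1 := (div_lt_one hA0).mpr hε3'
      linarith only [h]
    have hb1 : 0 < 1 + ε / A1 := by positivity
    set g : ℝ := (1 - ε/A0) ^ A0 * (1 + ε/A1) ^ A1 with hgdef
    have hgexp : g = Real.exp (Real.log (1 - ε/A0) * A0 + Real.log (1 + ε/A1) * A1) := by
      rw [hgdef, Real.rpow_def_of_pos hb0, Real.rpow_def_of_pos hb1, ← Real.exp_add]
    have hgpos : 0 < g := by rw [hgexp]; exact Real.exp_pos _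
    have hlog0le : Real.log (1 - ε/A0) ≤ -(ε/A0) := by
      have h := Real.log_le_sub_one_of_pos hb0; linarith only [h]
    have hlog1le : Real.log (1 + ε/A1) ≤ ε/A1 := by
      have h := Real.log_le_sub_one_of_pos hb1; linarith only [h]
    have he0 : ε/A0 * A0 = ε := div_mul_cancel₀ ε hA0.ne'
    have he1 : ε/A1 * A1 = ε := div_mul_cancel₀ ε hA1.ne'
    have hgle1 : g ≤ 1 := by
      rw [hgexp]
      have hexp : Real.log (1 - ε/A0) * A0 + Real.log (1 + ε/A1) * A1 ≤ 0 := by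
        have m0 := mul_le_mul_of_nonneg_right hlog0le hA0.le
        have m1 := mul_le_mul_of_nonneg_right hlog1le hA1.le
        linarith only [m0, m1, he0, he1]
      calc Real.exp _ ≤ Real.exp 0 := Real.exp_le_exp.mpr hexp
        _ = 1 := Real.exp_zero
    have hhalf : ε / A0 ≤ 1/2 := by
      rw [div_le_iff₀ hA0]; linarith only [hε2']
    have hlb0 : -(ε/A0) - 2*(-(ε/A0))^2 ≤ Real.log (1 - ε/A0) := by
      have := log_lb_aux (-(ε/A0)) (by linarith)
      have harg : (1 : ℝ) + -(ε/A0) = 1 - ε/A0 := by ring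
      rw [harg] at this
      linarith only [this]
    have hlb1 : ε/A1 - 2*(ε/A1)^2 ≤ Real.log (1 + ε/A1) := by
      have hy : -(1:ℝ)/2 ≤ ε/A1 := by
        have : (0:ℝ) ≤ ε/A1 := by positivity
        linarith
      exact log_lb_aux (ε/A1) hy
    have hgap : 1 - g ≤ 2 * (1/A0 + 1/A1) * ε^2 := by
      have hlogg := Real.log_le_sub_one_of_pos hgpos
      have hlogeq : Real.log g = Real.log (1 - ε/A0) * A0 + Real.log (1 + ε/A1) * A1 := by
        rw [hgexp]; exact Real.log_exp _
      have c0 : (-(ε/A0) - 2*(-(ε/A0))^2) * A0 = -ε - 2*ε^2/A0 := by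
        field_simp
      have c1 : (ε/A1 - 2*(ε/A1)^2) * A1 = ε - 2*ε^2/A1 := by
        field_simp
      have key : -(2 * (1/A0 + 1/A1) * ε^2)
          ≤ Real.log (1 - ε/A0) * A0 + Real.log (1 + ε/A1) * A1 := by
        have m0 := mul_le_mul_of_nonneg_right hlb0 hA0.le
        have m1 := mul_le_mul_of_nonneg_right hlb1 hA1.le
        rw [c0] at m0
        rw [c1] at m1
        have expand : -(2 * (1/A0 + 1/A1) * ε^2) = (-ε - 2*ε^2/A0) + (ε - 2*ε^2/A1) := by
          field_simp; ring
        rw [expand]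
        linarith only [m0, m1]
      linarith only [hlogg, hlogeq, key]
    -- the nearby cone point
    set p : E m n := (WithLp.equiv 2 _).symm (g • (q ε).ofLp.1, (q ε).ofLp.2) with hpdef
    have hp1 : p.ofLp.1 = g • (q ε).ofLp.1 := rfl
    have hp2 : p.ofLp.2 = (q ε).ofLp.2 := rfl
    have hq2nonneg : ∀ i, 0 ≤ (q ε).ofLp.2 i := by
      intro i
      by_cases hc0 : i = (⟨0, hn0⟩ : Fin n)
      · subst hc0; rw [h0]
        exact div_nonneg (by linarith only [hε3']) hW0.le
      · by_cases hc1 : i = (⟨1, hn1⟩ : Fin n)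
        · subst hc1; rw [h1]
          exact div_nonneg (by linarith only [hε, hA1]) hW1.le
        · rw [hrest i hc0 hc1]
          exact div_nonneg (hα i).1.le (hz2 i).le
    have hqnorm : ‖(q ε).ofLp.1‖ = N⁻¹ := by
      rw [hq1', norm_smul]
      have habs : ‖(-(N ^ 2)⁻¹ : ℝ)‖ = (N^2)⁻¹ := by
        rw [Real.norm_eq_abs, abs_neg, abs_inv, abs_of_pos (by positivity)]
      rw [habs, ← hNdef]
      field_simp
    have hprodz : ∏ i, (α i / z.ofLp.2 i) ^ α i = N⁻¹ := by
      rw [hzbd, ← Finset.prod_inv_distrib]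
      exact Finset.prod_congr rfl fun i _ => by
        rw [← Real.inv_rpow (div_nonneg (hz2 i).le (hα i).1.le), inv_div]
    have hprodq : ∏ i, (q ε).ofLp.2 i ^ α i = g * N⁻¹ := by
      have keyp : ∀ i : Fin n, (q ε).ofLp.2 i ^ α i
          = ((if i = (⟨0, hn0⟩ : Fin n) then (1 - ε/A0)^A0 else 1)
            * (if i = (⟨1, hn1⟩ : Fin n) then (1 + ε/A1)^A1 else 1)) * (α i / z.ofLp.2 i) ^ α i := by
        intro i
        by_cases hc0 : i = (⟨0, hn0⟩ : Fin n)
        · subst hc0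
          rw [if_pos rfl, if_neg hi01, mul_one, h0]
          have harg : (A0 - ε)/W0 = (1 - ε/A0) * (A0/W0) := by
            field_simp
          rw [harg, Real.mul_rpow hb0.le (by positivity)]
        · by_cases hc1 : i = (⟨1, hn1⟩ : Fin n)
          · subst hc1
            rw [if_neg hc0, if_pos rfl, one_mul, h1]
            have harg : (A1 + ε)/W1 = (1 + ε/A1) * (A1/W1) := by
              field_simp
            rw [harg, Real.mul_rpow hb1.le (by positivity)]
          · rw [if_neg hc0, if_neg hc1, hrest i hc0 hc1, mul_one, one_mul]
      rw [Finset.prod_congr rfl (fun i _ => keyp i), Finset.prod_mul_distrib,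
        Finset.prod_mul_distrib,
        Finset.prod_ite_eq' univ (⟨0, hn0⟩ : Fin n) (fun _ => (1 - ε/A0)^A0),
        Finset.prod_ite_eq' univ (⟨1, hn1⟩ : Fin n) (fun _ => (1 + ε/A1)^A1), hprodz]
      simp [hgdef]
    have hpnorm : ‖p.ofLp.1‖ = g * N⁻¹ := by
      rw [hp1, norm_smul, hqnorm, Real.norm_eq_abs, abs_of_pos hgpos]
    have hpmem : p ∈ PowCone m n α := by
      refine ⟨fun i => ?_, ?_⟩
      · rw [hp2]; exact hq2nonneg i
      · rw [hpnorm]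
        simp only [hp2]
        rw [hprodq]
    have hdistqp : dist (q ε) p = (1 - g) * N⁻¹ := by
      rw [WithLp.prod_dist_eq_of_L2]
      have e2 : dist (q ε).ofLp.2 p.ofLp.2 = 0 := by rw [hp2, dist_self]
      have e1 : dist (q ε).ofLp.1 p.ofLp.1 = (1-g) * N⁻¹ := by
        rw [hp1, dist_eq_norm]
        have hsub : (q ε).ofLp.1 - g • (q ε).ofLp.1 = (1 - g) • (q ε).ofLp.1 := by
          rw [sub_smul, one_smul]
        rw [hsub, norm_smul, hqnorm, Real.norm_eq_abs, abs_of_nonneg (by linarith only [hgle1])]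
      change √(dist (q ε).ofLp.1 p.ofLp.1 ^ 2 + dist (q ε).ofLp.2 p.ofLp.2 ^ 2) = _
      rw [e1, e2]
      rw [show ((0:ℝ))^2 = 0 by ring, add_zero,
        Real.sqrt_sq (mul_nonneg (by linarith only [hgle1]) (by positivity))]
    constructor
    · calc Metric.infDist (q ε) (PowCone m n α) ≤ dist (q ε) p :=
            Metric.infDist_le_dist_of_mem hpmem
        _ = (1-g) * N⁻¹ := hdistqp
        _ ≤ (2*(1/A0+1/A1) * ε^2) * N⁻¹ :=
            mul_le_mul_of_nonneg_right hgap (by positivity)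
        _ = 2*(1/A0+1/A1) * N⁻¹ * ε^2 := by ring
    · -- lower bound on distance to the ray
      set a := A0/W0 with hadef
      set b := A1/W1 with hbdef
      have ha : 0 < a := by positivity
      have hb : 0 < b := by positivity
      set K := a * W1⁻¹ + b * W0⁻¹ with hKdef
      set c₂ : ℝ := K / (a + b) with hc2def
      have hc2pos : 0 < c₂ := by positivity
      have hFrne : Fr.Nonempty := by
        refine ⟨0, ?_⟩
        rw [hFr]
        exact ⟨0, le_refl 0, by simp⟩
      by_contra hcon
      push_neg at hcon
      rw [Metric.infDist_lt_iff hFrne] at hcon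
      obtain ⟨y, hy, hdy⟩ := hcon
      rw [hFr] at hy
      obtain ⟨t, ht, rfl⟩ := hy
      have hsmul2 : ∀ i, (t • f).ofLp.2 i = t * f.ofLp.2 i := fun i => rfl
      have hΔ0 : (q ε).ofLp.2 ⟨0, hn0⟩ - (t • f).ofLp.2 ⟨0, hn0⟩ = (1-t)*a - ε*W0⁻¹ := by
        rw [hsmul2, hf2, h0, hadef, ← hA0def, ← hW0def]
        field_simp
        ring
      have hΔ1 : (q ε).ofLp.2 ⟨1, hn1⟩ - (t • f).ofLp.2 ⟨1, hn1⟩ = (1-t)*b + ε*W1⁻¹ := by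
        rw [hsmul2, hf2, h1, hbdef, ← hA1def, ← hW1def]
        field_simp
        ring
      have hquad : (c₂ * ε)^2 ≤ ((1-t)*a - ε*W0⁻¹)^2 + ((1-t)*b + ε*W1⁻¹)^2 := by
        have hq := quad_lb a b W0⁻¹ W1⁻¹ (1-t) ε ha hb
        have hKε : (a * W1⁻¹ + b * W0⁻¹) * ε = K * ε := by rw [hKdef]
        rw [hKε] at hq
        have hc2e : (c₂ * ε)^2 = (K*ε)^2 / (a+b)^2 := by
          rw [hc2def]; field_simp
        rw [hc2e, div_le_iff₀ (by positivity : (0:ℝ) < (a+b)^2)]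
        exact hq
      have hdist2 : ((1-t)*a - ε*W0⁻¹)^2 + ((1-t)*b + ε*W1⁻¹)^2
          ≤ dist (q ε) (t • f) ^ 2 := by
        have hd2 : dist (q ε) (t • f) ^ 2
            = dist (q ε).ofLp.1 (t • f).ofLp.1 ^ 2 + dist (q ε).ofLp.2 (t • f).ofLp.2 ^ 2 := by
          rw [WithLp.prod_dist_eq_of_L2, Real.sq_sqrt (by positivity)]; rfl
        have hd22 : dist (q ε).ofLp.2 (t • f).ofLp.2 ^ 2
            = ∑ i, ((q ε).ofLp.2 i - (t • f).ofLp.2 i)^2 := by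
          rw [EuclideanSpace.dist_eq, Real.sq_sqrt (by positivity)]
          simp [Real.dist_eq, sq_abs]
        have hpairsub : ∑ i ∈ ({⟨0, hn0⟩, ⟨1, hn1⟩} : Finset (Fin n)),
            ((q ε).ofLp.2 i - (t • f).ofLp.2 i)^2 ≤ ∑ i, ((q ε).ofLp.2 i - (t • f).ofLp.2 i)^2 :=
          Finset.sum_le_sum_of_subset_of_nonneg (Finset.subset_univ _)
            (fun i _ _ => sq_nonneg _)
        rw [Finset.sum_pair hi01, hΔ0, hΔ1] at hpairsub
        have h1le : dist (q ε).ofLp.2 (t • f).ofLp.2 ^ 2 ≤ dist (q ε) (t • f) ^ 2 := by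
          rw [hd2]; linarith only [sq_nonneg (dist (q ε).ofLp.1 (t • f).ofLp.1)]
        rw [hd22] at h1le
        linarith only [hpairsub, h1le]
      have hfinal : c₂ * ε ≤ dist (q ε) (t • f) := by
        have hsq : (c₂ * ε)^2 ≤ dist (q ε) (t • f) ^ 2 := le_trans hquad hdist2
        have := Real.sqrt_le_sqrt hsq
        rwa [Real.sqrt_sq (by positivity), Real.sqrt_sq dist_nonneg] at this
      linarith only [hfinal, hdy]
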